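/- Let μ ∈ (1,2), n ≥ 1, b_n ∈ L_n and b ∈ {0,1}, and let λ denote Lebesgue measure. Writing |T(w)| for the length of the interval T(w), with the convention |T(b_n b')| = 0 whenever b_n b' ∉ L_{n+1}, one has λ({x ∈ [0,1) : γ^{n+1}(x) = b_n b}) · ( |T(b_n 0)| + |T(b_n 1)| ) = λ({x ∈ [0,1) : γ^n(x) = b_n}) · |T(b_n b)|. -/

import Mathlib

open Set MeasureTheory

/-- The tent map `f(x) = μx` for `x ≤ 1/2` and `μ(1-x)` for `x ≥ 1/2`. -/
noncomputable def tentMap (μ : ℝ) (x : ℝ) : ℝ :=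
  if x ≤ 1/2 then μ * x else μ * (1 - x)

/-- `tentBit μ x k` is the `(k+1)`-st bit `b_{k+1}` of the tent code of `x`. -/
noncomputable def tentBit (μ x : ℝ) : ℕ → Bool
  | 0 => if 1/2 ≤ x then true else false
  | k + 1 =>
    if (tentMap μ)^[k+1] x < 1/2 then tentBit μ x k
    else if 1/2 < (tentMap μ)^[k+1] x then !(tentBit μ x k)
    else true

/-- The tent code `γ^n(x) = b_1 ⋯ b_n`. -/
noncomputable def tentCode (μ : ℝ) (n : ℕ) (x : ℝ) : List Bool :=
  (List.range n).map (tentBit μ x)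

/-- The tent language `L_n = {γ^n(x) : x ∈ [0,1)}`. -/
def tentLang (μ : ℝ) (n : ℕ) : Set (List Bool) :=
  {w | ∃ x ∈ Set.Ico (0:ℝ) 1, tentCode μ n x = w}

/-- The segment-type `T(w) = {f^n(x) : x ∈ [0,1), γ^n(x) = w}`. -/
def segType (μ : ℝ) (n : ℕ) (w : List Bool) : Set ℝ :=
  {y | ∃ x ∈ Set.Ico (0:ℝ) 1, tentCode μ n x = w ∧ (tentMap μ)^[n] x = y}

/-- The set of segment-types `𝒯_n = {T(w) : w ∈ L_n}`. -/
def typeSet (μ : ℝ) (n : ℕ) : Set (Set ℝ) :=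
  {S | ∃ w ∈ tentLang μ n, segType μ n w = S}

/-- `I_i = T(γ^i(1/2))`. -/
noncomputable def Iseg (μ : ℝ) (i : ℕ) : Set ℝ :=
  segType μ i (tentCode μ i (1/2))

/-- `Ī_i = T(c̄_i)` where `c̄_i` is the bitwise complement of `γ^i(1/2)`. -/
noncomputable def Isegbar (μ : ℝ) (i : ℕ) : Set ℝ :=
  segType μ i ((tentCode μ i (1/2)).map (fun b => !b))

/-- The length of the interval `T(w)` (zero if `T(w)` is empty). -/
noncomputable def segLen (μ : ℝ) (n : ℕ) (w : List Bool) : ℝ :=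
  (MeasureTheory.volume (segType μ n w)).toReal

lemma tentMap_le (μ : ℝ) {y : ℝ} (h : y ≤ 1/2) : tentMap μ y = μ * y := if_pos h

lemma tentMap_ge (μ : ℝ) {y : ℝ} (h : 1/2 ≤ y) : tentMap μ y = μ * (1 - y) := by
  unfold tentMap
  split_ifs with h'
  · have : y = (1:ℝ)/2 := le_antisymm h' h
    subst this; norm_num
  · rfl

lemma tentCode_succ (μ : ℝ) (n : ℕ) (x : ℝ) :
    tentCode μ (n+1) x = tentCode μ n x ++ [tentBit μ x n] := by
  unfold tentCode
  rw [List.range_succ, List.map_append, List.map_singleton]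

lemma tentCode_length (μ : ℝ) (n : ℕ) (x : ℝ) : (tentCode μ n x).length = n := by
  simp [tentCode]

lemma code_succ_inj {μ : ℝ} {n : ℕ} {x y : ℝ}
    (h : tentCode μ (n+1) x = tentCode μ (n+1) y) :
    tentCode μ n x = tentCode μ n y ∧ tentBit μ x n = tentBit μ y n := by
  rw [tentCode_succ, tentCode_succ] at h
  have hl : (tentCode μ n x).length = (tentCode μ n y).length := by
    simp [tentCode_length]
  obtain ⟨h1, h2⟩ := List.append_inj h hl
  exact ⟨h1, by simpa using h2⟩

lemma same_side {μ : ℝ} {n : ℕ} {x y : ℝ}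
    (h : tentCode μ (n+1) x = tentCode μ (n+1) y) :
    ¬((tentMap μ)^[n] x < 1/2 ∧ 1/2 < (tentMap μ)^[n] y) := by
  rintro ⟨hx, hy⟩
  obtain ⟨h1, h2⟩ := code_succ_inj h
  cases n with
  | zero =>
      simp only [Function.iterate_zero, id_eq] at hx hy
      simp only [tentBit, if_neg (not_le.mpr hx), if_pos hy.le] at h2
      exact Bool.false_ne_true h2
  | succ k =>
      obtain ⟨_, h3⟩ := code_succ_inj h1
      simp only [tentBit, if_pos hx, if_neg (not_lt.mpr hy.le), if_pos hy] at h2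
      rw [h3] at h2
      simp at h2

lemma tent_struct (μ : ℝ) (n : ℕ) (w : List Bool) :
    ∃ ε d : ℝ, (ε = 1 ∨ ε = -1) ∧
      ∀ x ∈ Set.Ico (0:ℝ) 1, tentCode μ n x = w →
        (tentMap μ)^[n] x = ε * μ^n * x + d := by
  induction n generalizing w with
  | zero => exact ⟨1, 0, Or.inl rfl, fun x _ _ => by simp⟩
  | succ n ih =>
    by_cases hE : ∃ x₀ ∈ Set.Ico (0:ℝ) 1, tentCode μ (n+1) x₀ = w
    · obtain ⟨x₀, hx₀, hcode₀⟩ := hE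
      obtain ⟨ε, d, hε, haffine⟩ := ih (tentCode μ n x₀)
      have hmem : ∀ x ∈ Set.Ico (0:ℝ) 1, tentCode μ (n+1) x = w →
          (tentMap μ)^[n] x = ε * μ^n * x + d := fun x hx hc =>
        haffine x hx (code_succ_inj (hc.trans hcode₀.symm)).1
      by_cases hside : ∀ x ∈ Set.Ico (0:ℝ) 1, tentCode μ (n+1) x = w →
          (tentMap μ)^[n] x ≤ 1/2
      · refine ⟨ε, μ * d, hε, fun x hx hc => ?_⟩
        rw [Function.iterate_succ_apply', tentMap_le μ (hside x hx hc), hmem x hx hc]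
        ring
      · push_neg at hside
        obtain ⟨x₁, hx₁, hc₁, hgt⟩ := hside
        have hside' : ∀ x ∈ Set.Ico (0:ℝ) 1, tentCode μ (n+1) x = w →
            1/2 ≤ (tentMap μ)^[n] x := by
          intro x hx hc
          by_contra hlt
          exact same_side (hc.trans hc₁.symm) ⟨not_le.mp hlt, hgt⟩
        refine ⟨-ε, μ - μ * d, by rcases hε with h | h <;> simp [h], fun x hx hc => ?_⟩
        rw [Function.iterate_succ_apply', tentMap_ge μ (hside' x hx hc), hmem x hx hc]
        ring
    · push_neg at hE
      exact ⟨1, 0, Or.inl rfl, fun x hx hc => absurd hc (hE x hx)⟩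

lemma measurable_tentMap (μ : ℝ) : Measurable (tentMap μ) := by
  unfold tentMap
  exact Measurable.ite measurableSet_Iic (measurable_const.mul measurable_id)
    (measurable_const.mul (measurable_const.sub measurable_id))

lemma volume_image_affine {a : ℝ} (ha : a ≠ 0) (d : ℝ) (S : Set ℝ) :
    volume ((fun y => a * y + d) '' S) = ENNReal.ofReal |a| * volume S := by
  have himg : (fun y => a * y + d) '' S = (· + -d) ⁻¹' ((a⁻¹ * ·) ⁻¹' S) := by
    ext z
    simp only [Set.mem_image, Set.mem_preimage]
    constructor
    · rintro ⟨y, hy, rfl⟩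
      have : a⁻¹ * (a * y + d + -d) = y := by field_simp; ring
      rwa [this]
    · intro hz
      exact ⟨a⁻¹ * (z + -d), hz, by field_simp; ring⟩
  rw [himg, measure_preimage_add_right, Real.volume_preimage_mul_left (inv_ne_zero ha),
    inv_inv]

lemma segType_eq_image (μ : ℝ) (k : ℕ) (u : List Bool) :
    segType μ k u = (tentMap μ)^[k] '' {x ∈ Set.Ico (0:ℝ) 1 | tentCode μ k x = u} := by
  ext y
  simp only [segType, Set.mem_setOf_eq, Set.mem_image]
  tauto

lemma bit_char {μ x : ℝ} {m : ℕ} {c : Bool} (hc : tentBit μ x m = c) :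
    (tentBit μ x (m+1) = true ↔
      (tentMap μ)^[m+1] x ∈ (if c then Iic (1/2) else Ici (1/2) : Set ℝ)) := by
  rcases lt_trichotomy ((tentMap μ)^[m+1] x) (1/2) with hlt | heq | hgt
  · simp only [tentBit, if_pos hlt, hc]
    cases c <;> simp [-Function.iterate_succ] <;> linarith
  · simp only [tentBit, if_neg (not_lt.mpr heq.ge), if_neg (not_lt.mpr heq.le)]
    cases c <;> simp [-Function.iterate_succ] <;> linarith [heq.le, heq.ge]
  · simp only [tentBit, if_neg (not_lt.mpr hgt.le), if_pos hgt, hc]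
    cases c <;> simp [-Function.iterate_succ] <;> linarith

/-- the conditional-probability identity
`λ({γ^{n+1} = b_n b}) · (|T(b_n 0)| + |T(b_n 1)|) = λ({γ^n = b_n}) · |T(b_n b)|`. -/
theorem tent_code_cond_prob (μ : ℝ) (hμ1 : 1 < μ) (hμ2 : μ < 2)
    (n : ℕ) (hn : 1 ≤ n) (w : List Bool) (hw : w ∈ tentLang μ n) (b : Bool) :
    (volume {x ∈ Set.Ico (0:ℝ) 1 | tentCode μ (n+1) x = w ++ [b]}).toReal *
        (segLen μ (n+1) (w ++ [false]) + segLen μ (n+1) (w ++ [true])) =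
      (volume {x ∈ Set.Ico (0:ℝ) 1 | tentCode μ n x = w}).toReal *
        segLen μ (n+1) (w ++ [b]) := by
  obtain ⟨m, rfl⟩ : ∃ m, n = m + 1 := ⟨n - 1, (Nat.succ_pred_eq_of_pos hn).symm⟩
  obtain ⟨x₀, hx₀, hcode₀⟩ := hw
  have hμ0 : (0:ℝ) < μ := lt_trans one_pos hμ1
  set E : Set ℝ := {x ∈ Set.Ico (0:ℝ) 1 | tentCode μ (m+1) x = w} with hE
  have hbitc : ∀ x ∈ E, tentBit μ x m = tentBit μ x₀ m := fun x hx =>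
    (code_succ_inj (hx.2.trans hcode₀.symm)).2
  obtain ⟨Ht, hHtm, hHtd, hHtcd, hbit_true⟩ :
      ∃ Ht : Set ℝ, MeasurableSet Ht ∧ (Ht ⊆ Iic (1/2) ∨ Ht ⊆ Ici (1/2)) ∧
        (Htᶜ ⊆ Iic (1/2) ∨ Htᶜ ⊆ Ici (1/2)) ∧
        ∀ x ∈ E, (tentBit μ x (m+1) = true ↔ (tentMap μ)^[m+1] x ∈ Ht) := by
    cases hcc : tentBit μ x₀ m with
    | false =>
        refine ⟨Ici (1/2), measurableSet_Ici, Or.inr subset_rfl, Or.inl ?_, fun x hx => ?_⟩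
        · rw [compl_Ici]; exact Iio_subset_Iic_self
        · simpa using bit_char ((hbitc x hx).trans hcc)
    | true =>
        refine ⟨Iic (1/2), measurableSet_Iic, Or.inl subset_rfl, Or.inr ?_, fun x hx => ?_⟩
        · rw [compl_Iic]; exact Ioi_subset_Ici_self
        · simpa using bit_char ((hbitc x hx).trans hcc)
  have hbit' : ∀ (b' : Bool), ∀ x ∈ E,
      (tentBit μ x (m+1) = b' ↔ (tentMap μ)^[m+1] x ∈ (if b' then Ht else Htᶜ)) := by
    intro b' x hx
    cases b'
    · simp only [if_neg Bool.false_ne_true, Set.mem_compl_iff]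
      constructor
      · intro h hm
        rw [(hbit_true x hx).mpr hm] at h
        simp at h
      · intro h
        cases hbb : tentBit μ x (m+1)
        · rfl
        · exact absurd ((hbit_true x hx).mp hbb) h
    · simpa using hbit_true x hx
  have hEb : ∀ b' : Bool, {x ∈ Set.Ico (0:ℝ) 1 | tentCode μ (m+1+1) x = w ++ [b']} =
      E ∩ (tentMap μ)^[m+1] ⁻¹' (if b' then Ht else Htᶜ) := by
    intro b'
    ext x
    simp only [Set.mem_setOf_eq, Set.mem_inter_iff, Set.mem_preimage, hE]
    constructor
    · rintro ⟨hx, hcode⟩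
      rw [tentCode_succ] at hcode
      have hl : (tentCode μ (m+1) x).length = w.length := by
        rw [← hcode₀, tentCode_length, tentCode_length]
      obtain ⟨h1, h2⟩ := List.append_inj hcode hl
      have hb : tentBit μ x (m+1) = b' := by simpa using h2
      exact ⟨⟨hx, h1⟩, (hbit' b' x ⟨hx, h1⟩).mp hb⟩
    · rintro ⟨⟨hx, h1⟩, h2⟩
      refine ⟨hx, ?_⟩
      rw [tentCode_succ, h1, (hbit' b' x ⟨hx, h1⟩).mpr h2]
  -- affine structure on E
  obtain ⟨ε, d, hε, haff⟩ := tent_struct μ (m+1) w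
  -- volume of segment types
  have hvol_seg : ∀ b' : Bool, volume (segType μ (m+1+1) (w ++ [b'])) =
      ENNReal.ofReal (μ^(m+2)) *
        volume {x ∈ Set.Ico (0:ℝ) 1 | tentCode μ (m+1+1) x = w ++ [b']} := by
    intro b'
    rw [segType_eq_image, hEb b']
    set S : Set ℝ := E ∩ (tentMap μ)^[m+1] ⁻¹' (if b' then Ht else Htᶜ) with hS
    have hsub : ∀ x ∈ S, x ∈ E := fun x hx => hx.1
    have hS' : (if b' then Ht else Htᶜ) ⊆ Iic (1/2) ∨ (if b' then Ht else Htᶜ) ⊆ Ici (1/2) := by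
      cases b'
      · simpa using hHtcd
      · simpa using hHtd
    have hεne : ε ≠ 0 := by rcases hε with h | h <;> rw [h] <;> norm_num
    have hpowpos : (0:ℝ) < μ^(m+2) := pow_pos hμ0 _
    have habs : ∀ s : ℝ, s = 1 ∨ s = -1 → |s * μ^(m+2)| = μ^(m+2) := by
      rintro s (rfl | rfl) <;>
        simp [abs_mul, abs_of_pos hpowpos]
    rcases hS' with hside | hside
    · have hcong : ∀ x ∈ S, (tentMap μ)^[m+1+1] x = (fun y => (ε * μ^(m+2)) * y + μ * d) x := by
        intro x hx
        have hhalf : (tentMap μ)^[m+1] x ≤ 1/2 := hside hx.2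
        rw [Function.iterate_succ_apply', tentMap_le μ hhalf, haff x hx.1.1 hx.1.2]
        ring
      rw [Set.image_congr hcong, volume_image_affine (mul_ne_zero hεne hpowpos.ne') (μ * d) S,
        habs ε hε]
    · have hcong : ∀ x ∈ S, (tentMap μ)^[m+1+1] x = (fun y => (-ε * μ^(m+2)) * y + (μ - μ * d)) x := by
        intro x hx
        have hhalf : 1/2 ≤ (tentMap μ)^[m+1] x := hside hx.2
        rw [Function.iterate_succ_apply', tentMap_ge μ hhalf, haff x hx.1.1 hx.1.2]
        ring
      rw [Set.image_congr hcong,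
        volume_image_affine (mul_ne_zero (neg_ne_zero.mpr hεne) hpowpos.ne') (μ - μ * d) S,
        habs (-ε) (by rcases hε with h | h <;> simp [h])]
  -- partition of E
  have hFmeas : Measurable ((tentMap μ)^[m+1]) := (measurable_tentMap μ).iterate (m+1)
  have hpart : volume E =
      volume (E ∩ (tentMap μ)^[m+1] ⁻¹' Ht) + volume (E ∩ (tentMap μ)^[m+1] ⁻¹' Htᶜ) := by
    rw [Set.preimage_compl, ← Set.diff_eq]
    exact (measure_inter_add_diff E (hFmeas hHtm)).symm
  -- finiteness
  have hfin : ∀ S : Set ℝ, S ⊆ Set.Ico (0:ℝ) 1 → volume S ≠ ⊤ := by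
    intro S hS
    exact ((measure_mono hS).trans_lt (by simp)).ne
  have hEfin : volume E ≠ ⊤ := hfin E (fun x hx => hx.1)
  have hfin' : ∀ b' : Bool,
      volume {x ∈ Set.Ico (0:ℝ) 1 | tentCode μ (m+1+1) x = w ++ [b']} ≠ ⊤ :=
    fun b' => hfin _ (fun x hx => hx.1)
  -- real-number bookkeeping
  have hEbt : volume E = volume {x ∈ Set.Ico (0:ℝ) 1 | tentCode μ (m+1+1) x = w ++ [true]} +
      volume {x ∈ Set.Ico (0:ℝ) 1 | tentCode μ (m+1+1) x = w ++ [false]} := by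
    rw [hEb true, hEb false]
    simpa using hpart
  set A0 := (volume {x ∈ Set.Ico (0:ℝ) 1 | tentCode μ (m+1+1) x = w ++ [false]}).toReal with hA0
  set A1 := (volume {x ∈ Set.Ico (0:ℝ) 1 | tentCode μ (m+1+1) x = w ++ [true]}).toReal with hA1
  have hEreal : (volume E).toReal = A1 + A0 := by
    rw [hEbt, ENNReal.toReal_add (hfin' true) (hfin' false)]
  have hseg : ∀ b' : Bool, segLen μ (m+1+1) (w ++ [b']) = μ^(m+2) *
      (volume {x ∈ Set.Ico (0:ℝ) 1 | tentCode μ (m+1+1) x = w ++ [b']}).toReal := by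
    intro b'
    rw [segLen, hvol_seg b', ENNReal.toReal_mul, ENNReal.toReal_ofReal (pow_pos hμ0 _).le]
  rw [hseg false, hseg true, hseg b, ← hA0, ← hA1]
  have hgoal : (volume E).toReal = A1 + A0 := hEreal
  cases b
  · rw [← hA0]
    show A0 * (μ^(m+2) * A0 + μ^(m+2) * A1) = (volume E).toReal * (μ^(m+2) * A0)
    rw [hgoal]; ring
  · rw [← hA1]
    show A1 * (μ^(m+2) * A0 + μ^(m+2) * A1) = (volume E).toReal * (μ^(m+2) * A1)
    rw [hgoal]; ring
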